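/- Suppose X has a Lebesgue density f_X supported on [0,1]. Then for every integer k ≥ 1, the k-th moment of Z satisfies τ_k = E(Z^k) = 1 − (k/√2) · ∫₀¹ (f_X(x)/√(1−x)) · G_k(x) dx, and the integral on the right-hand side is finite. -/

import Mathlib

open MeasureTheory
open scoped ENNReal

/-- `G_k(x) = ∫_{2x-1}^{1} t^{k-1} √(1 + t - 2x) dt` for `k ≥ 1` (and `G₀ ≡ 0`). -/
noncomputable def G : ℕ → ℝ → ℝ
  | 0, _ => 0
  | (k + 1), x => ∫ t in (2 * x - 1)..1, t ^ k * Real.sqrt (1 + t - 2 * x)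

open intervalIntegral

/-- the inner function -/
noncomputable def q (x s : ℝ) : ℝ := 2 * x - 1 + 2 * (1 - x) * s ^ 2

lemma q_hasDerivAt (x s : ℝ) : HasDerivAt (fun s => q x s) (4 * (1 - x) * s) s := by
  have h : HasDerivAt (fun s : ℝ => 2 * x - 1 + 2 * (1 - x) * s ^ 2)
      (0 + 2 * (1 - x) * (2 * s)) s := by
    exact (hasDerivAt_const _ _).add (((hasDerivAt_pow 2 s).const_mul (2 * (1 - x))).congr_deriv
      (by ring))
  simpa [q] using h.congr_deriv (by ring)

lemma q_continuous : Continuous (fun p : ℝ × ℝ => q p.1 p.2) := by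
  unfold q; continuity

lemma q_one (x : ℝ) : q x 1 = 1 := by simp only [q]; ring

lemma ibp (x : ℝ) (m : ℕ) :
    ∫ s in (0:ℝ)..1, ((q x s) ^ (m+1) + 4 * (1 - x) * (m+1) * s ^ 2 * (q x s) ^ m) = 1 := by
  have key : ∀ s ∈ Set.uIcc (0:ℝ) 1, HasDerivAt (fun s => s * (q x s) ^ (m+1))
      ((q x s) ^ (m+1) + 4 * (1 - x) * (m+1) * s ^ 2 * (q x s) ^ m) s := by
    intro s _
    have h1 : HasDerivAt (fun s => (q x s) ^ (m+1))
        ((m+1 : ℕ) * (q x s) ^ m * (4 * (1 - x) * s)) s :=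
      (q_hasDerivAt x s).pow (m+1) |>.congr_deriv (by push_cast; ring)
    have := (hasDerivAt_id s).mul h1
    exact this.congr_deriv (by simp only [id]; push_cast; ring)
  have hcont : ContinuousOn (fun s => (q x s) ^ (m+1) + 4 * (1 - x) * (m+1) * s ^ 2 * (q x s) ^ m)
      (Set.uIcc 0 1) := by
    apply Continuous.continuousOn
    have : Continuous (fun s => q x s) := q_continuous.comp (continuous_const.prodMk continuous_id)
    continuity
  have := intervalIntegral.integral_eq_sub_of_hasDerivAt key hcont.intervalIntegrable
  rw [this]
  simp [q_one]

lemma G_eq (x : ℝ) (hx1 : x ≤ 1) (m : ℕ) :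
    G (m+1) x = 4 * (1 - x) * Real.sqrt (2 * (1 - x)) * ∫ s in (0:ℝ)..1, s ^ 2 * (q x s) ^ m := by
  have hsub : (∫ s in (0:ℝ)..1, (4 * (1 - x) * s) •
        ((fun t => t ^ m * Real.sqrt (1 + t - 2 * x)) ∘ (fun s => q x s)) s)
      = ∫ t in (q x 0)..(q x 1), t ^ m * Real.sqrt (1 + t - 2 * x) := by
    apply intervalIntegral.integral_comp_smul_deriv (fun s _ => q_hasDerivAt x s)
    · exact (continuous_const.mul continuous_id).continuousOn
    · continuity
  have hq0 : q x 0 = 2 * x - 1 := by simp [q]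
  rw [hq0, q_one] at hsub
  have : G (m+1) x = ∫ t in (2 * x - 1)..1, t ^ m * Real.sqrt (1 + t - 2 * x) := rfl
  rw [this, ← hsub]
  rw [← intervalIntegral.integral_const_mul]
  apply intervalIntegral.integral_congr
  intro s hs
  rw [Set.uIcc_of_le (by norm_num)] at hs
  have hs0 : 0 ≤ s := hs.1
  have h1 : 1 + q x s - 2 * x = 2 * (1 - x) * s ^ 2 := by simp only [q]; ring
  simp only [smul_eq_mul, Function.comp_apply, h1]
  rw [Real.sqrt_mul (by nlinarith : (0:ℝ) ≤ 2 * (1 - x)), Real.sqrt_sq hs0]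
  ring

lemma q_cont (x : ℝ) : Continuous (fun s => q x s) :=
  q_continuous.comp (continuous_const.prodMk continuous_id)

lemma key_eq (x : ℝ) (hx : x ∈ Set.Icc (0:ℝ) 1) (m : ℕ) :
    ∫ s in (0:ℝ)..1, (q x s) ^ (m+1)
      = 1 - ((m+1 : ℕ) : ℝ) / Real.sqrt 2 * (G (m+1) x / Real.sqrt (1 - x)) := by
  have hsplit : (∫ s in (0:ℝ)..1, (q x s) ^ (m+1))
      + ∫ s in (0:ℝ)..1, 4 * (1 - x) * (m+1) * s ^ 2 * (q x s) ^ m = 1 := by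
    rw [← intervalIntegral.integral_add]
    · exact ibp x m
    · exact (((q_cont x).pow _).intervalIntegrable _ _)
    · apply Continuous.intervalIntegrable
      have := q_cont x
      continuity
  have h2 : (∫ s in (0:ℝ)..1, 4 * (1 - x) * (m+1) * s ^ 2 * (q x s) ^ m)
      = 4 * (1 - x) * (m+1) * ∫ s in (0:ℝ)..1, s ^ 2 * (q x s) ^ m := by
    rw [← intervalIntegral.integral_const_mul]
    congr 1; ext s; ring
  rcases eq_or_lt_of_le hx.2 with h1 | h1
  · -- x = 1
    subst h1
    have hq : ∀ s : ℝ, q 1 s = 1 := fun s => by norm_num [q]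
    simp [hq, G_eq 1 le_rfl m]
  · have hs1 : (0:ℝ) < 1 - x := by linarith
    have hsq : Real.sqrt (2 * (1 - x)) = Real.sqrt 2 * Real.sqrt (1 - x) :=
      Real.sqrt_mul (by norm_num) _
    have h3 : ((m+1 : ℕ) : ℝ) / Real.sqrt 2 * (G (m+1) x / Real.sqrt (1 - x))
        = 4 * (1 - x) * (m+1) * ∫ s in (0:ℝ)..1, s ^ 2 * (q x s) ^ m := by
      rw [G_eq x hx.2 m, hsq]
      have h2pos : (0:ℝ) < Real.sqrt 2 := Real.sqrt_pos.mpr (by norm_num)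
      have hxpos : (0:ℝ) < Real.sqrt (1 - x) := Real.sqrt_pos.mpr hs1
      field_simp
      push_cast; ring
    rw [h3]
    linarith [hsplit, h2]

lemma T_integral (x : ℝ) (m : ℕ) :
    ∫ t, (q x t) ^ (m+1) ∂((2 : ℝ≥0∞)⁻¹ • volume.restrict (Set.Icc (-1 : ℝ) 1))
      = ∫ s in (0:ℝ)..1, (q x s) ^ (m+1) := by
  have hcont : Continuous (fun t => (q x t) ^ (m+1)) := (q_cont x).pow _
  rw [MeasureTheory.integral_smul_measure]
  have htoReal : ((2 : ℝ≥0∞)⁻¹).toReal = (2:ℝ)⁻¹ := by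
    simp
  rw [htoReal]
  have hIcc : ∫ t in Set.Icc (-1:ℝ) 1, (q x t) ^ (m+1)
      = ∫ t in (-1:ℝ)..1, (q x t) ^ (m+1) := by
    rw [MeasureTheory.integral_Icc_eq_integral_Ioc,
      intervalIntegral.integral_of_le (by norm_num : (-1:ℝ) ≤ 1)]
  rw [hIcc]
  have hsplit : ∫ t in (-1:ℝ)..1, (q x t) ^ (m+1)
      = (∫ t in (-1:ℝ)..0, (q x t) ^ (m+1)) + ∫ t in (0:ℝ)..1, (q x t) ^ (m+1) :=
    (intervalIntegral.integral_add_adjacent_intervals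
      (hcont.intervalIntegrable _ _) (hcont.intervalIntegrable _ _)).symm
  have heven : (∫ t in (-1:ℝ)..0, (q x t) ^ (m+1)) = ∫ t in (0:ℝ)..1, (q x t) ^ (m+1) := by
    have := intervalIntegral.integral_comp_neg (a := (0:ℝ)) (b := 1)
      (f := fun t => (q x t) ^ (m+1))
    rw [neg_zero] at this
    rw [← this]
    apply intervalIntegral.integral_congr
    intro s _
    have h : q x (-s) = q x s := by simp only [q]; ring
    simp only [h]
  rw [hsplit, heven]
  simp only [smul_eq_mul]
  ring

lemma G_continuous (m : ℕ) : Continuous (G (m+1)) := by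
  have h : Continuous fun x : ℝ => ∫ t in (1:ℝ)..(2 * x - 1), t ^ m * Real.sqrt (1 + t - 2 * x) := by
    apply intervalIntegral.continuous_parametric_intervalIntegral_of_continuous
      (f := fun x t => t ^ m * Real.sqrt (1 + t - 2 * x))
    · apply Continuous.mul
      · exact (continuous_snd.pow m)
      · exact Real.continuous_sqrt.comp (by continuity)
    · continuity
  have : G (m+1) = fun x : ℝ => -∫ t in (1:ℝ)..(2 * x - 1), t ^ m * Real.sqrt (1 + t - 2 * x) := by
    funext x
    rw [← intervalIntegral.integral_symm]
    rfl
  rw [this]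
  exact h.neg

lemma G_div (x : ℝ) (hx : x ∈ Set.Icc (0:ℝ) 1) (m : ℕ) :
    G (m+1) x / Real.sqrt (1 - x)
      = 4 * Real.sqrt 2 * (1 - x) * ∫ s in (0:ℝ)..1, s ^ 2 * (q x s) ^ m := by
  rcases eq_or_lt_of_le hx.2 with h1 | h1
  · subst h1
    rw [G_eq 1 le_rfl m]
    simp
  · have hs1 : (0:ℝ) < 1 - x := by linarith
    have hsq : Real.sqrt (2 * (1 - x)) = Real.sqrt 2 * Real.sqrt (1 - x) :=
      Real.sqrt_mul (by norm_num) _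
    have hxpos : (0:ℝ) < Real.sqrt (1 - x) := Real.sqrt_pos.mpr hs1
    rw [G_eq x hx.2 m, hsq]
    field_simp

lemma q_abs_le (x : ℝ) (hx : x ∈ Set.Icc (0:ℝ) 1) (s : ℝ) (hs : s ∈ Set.Icc (-1:ℝ) 1) :
    |q x s| ≤ 1 := by
  have h1 : s ^ 2 ≤ 1 := by nlinarith [hs.1, hs.2]
  have h2 : 0 ≤ s ^ 2 := sq_nonneg s
  rw [abs_le]
  simp only [q]
  constructor <;> nlinarith [hx.1, hx.2]

lemma G_div_bound (x : ℝ) (hx : x ∈ Set.Icc (0:ℝ) 1) (m : ℕ) :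
    |G (m+1) x / Real.sqrt (1 - x)| ≤ 4 * Real.sqrt 2 := by
  rw [G_div x hx m]
  have hI : |∫ s in (0:ℝ)..1, s ^ 2 * (q x s) ^ m| ≤ 1 := by
    have := intervalIntegral.norm_integral_le_of_norm_le_const
      (C := 1) (f := fun s => s ^ 2 * (q x s) ^ m) (a := 0) (b := 1) ?_
    · simpa using this
    · intro s hs
      rw [Set.uIoc_of_le (by norm_num : (0:ℝ) ≤ 1)] at hs
      have hs' : s ∈ Set.Icc (-1:ℝ) 1 := ⟨by linarith [hs.1], hs.2⟩
      have h1 : |q x s| ≤ 1 := q_abs_le x hx s hs'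
      have h2 : |s ^ 2| ≤ 1 := by rw [abs_of_nonneg (sq_nonneg s)]; nlinarith [hs.1, hs.2]
      have hA : |s| ^ 2 ≤ 1 := pow_le_one₀ (abs_nonneg _) (abs_le.mpr ⟨hs'.1, hs'.2⟩)
      have hB : |q x s| ^ m ≤ 1 := pow_le_one₀ (abs_nonneg _) h1
      have hB0 : 0 ≤ |q x s| ^ m := pow_nonneg (abs_nonneg _) m
      calc ‖s ^ 2 * (q x s) ^ m‖ = |s| ^ 2 * |q x s| ^ m := by
            rw [Real.norm_eq_abs, abs_mul, abs_pow, abs_pow]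
        _ ≤ 1 := by nlinarith [sq_nonneg (|s|)]
  have hsqrt2 : (0:ℝ) ≤ Real.sqrt 2 := Real.sqrt_nonneg 2
  have hx1 : 0 ≤ 1 - x := by linarith [hx.2]
  have hx2 : 1 - x ≤ 1 := by linarith [hx.1]
  rw [abs_mul, abs_mul, abs_of_nonneg (by positivity : (0:ℝ) ≤ 4 * Real.sqrt 2),
    abs_of_nonneg hx1]
  calc 4 * Real.sqrt 2 * (1 - x) * |∫ s in (0:ℝ)..1, s ^ 2 * q x s ^ m|
      ≤ 4 * Real.sqrt 2 * 1 * 1 := by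
        apply mul_le_mul (by nlinarith) hI (abs_nonneg _) (by positivity)
    _ = 4 * Real.sqrt 2 := by ring

/-- Let `X` take values in `[0,1]` with Lebesgue density `f_X` supported on `[0,1]`, let
`T` be uniform on `[-1,1]` and independent of `X`, and set
`Z = T² + (1 - T²)(2X - 1)`.  Then for every `k ≥ 1` the moment
`τ_k = E(Z^k) = 1 - (k/√2) ∫₀¹ (f_X(x)/√(1-x)) G_k(x) dx`, and the integral on the
right-hand side is finite. -/
theorem moments_tau_k
    {Ω : Type*} [MeasurableSpace Ω] (P : Measure Ω) [IsProbabilityMeasure P]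
    (X T : Ω → ℝ) (hX : Measurable X) (hT : Measurable T)
    (hX_range : ∀ ω, X ω ∈ Set.Icc (0 : ℝ) 1)
    (hT_unif : Measure.map T P = (2 : ℝ≥0∞)⁻¹ • volume.restrict (Set.Icc (-1 : ℝ) 1))
    (hindep : ProbabilityTheory.IndepFun X T P)
    (fX : ℝ → ℝ) (hfX_meas : Measurable fX) (hfX_nonneg : ∀ x, 0 ≤ fX x)
    (hfX_supp : ∀ x, x ∉ Set.Icc (0 : ℝ) 1 → fX x = 0)
    (hX_law : Measure.map X P = volume.withDensity fun x => ENNReal.ofReal (fX x))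
    (k : ℕ) (hk : 1 ≤ k) :
    IntervalIntegrable (fun x => fX x / Real.sqrt (1 - x) * G k x) volume 0 1 ∧
      ∫ ω, (T ω ^ 2 + (1 - T ω ^ 2) * (2 * X ω - 1)) ^ k ∂P
        = 1 - (k : ℝ) / Real.sqrt 2 *
            ∫ x in (0 : ℝ)..1, fX x / Real.sqrt (1 - x) * G k x := by
  obtain ⟨m, rfl⟩ : ∃ m, k = m + 1 := ⟨k - 1, (Nat.succ_pred_eq_of_pos hk).symm⟩
  set D : ℝ → ℝ := fun x => fX x / Real.sqrt (1 - x) * G (m+1) x with hD_def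
  have hD_eq : ∀ x, D x = fX x * (G (m+1) x / Real.sqrt (1 - x)) := by
    intro x
    show fX x / Real.sqrt (1 - x) * G (m+1) x = _
    rw [div_mul_eq_mul_div, mul_div_assoc]
  -- measurability of D
  have hDmeas : Measurable D := by
    apply hfX_meas.div (Real.continuous_sqrt.comp (by continuity)).measurable |>.mul
      (G_continuous m).measurable
  -- fX is integrable with integral 1
  haveI : IsProbabilityMeasure (Measure.map X P) := Measure.isProbabilityMeasure_map hX.aemeasurable
  have hlint : (∫⁻ x, ENNReal.ofReal (fX x)) = 1 := by
    have h := measure_univ (μ := Measure.map X P)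
    rw [hX_law, withDensity_apply _ MeasurableSet.univ, setLIntegral_univ] at h
    exact h
  have hfX_int : Integrable fX := by
    refine ⟨hfX_meas.aestronglyMeasurable, ?_⟩
    rw [HasFiniteIntegral]
    have : ∀ x, ‖fX x‖ₑ = ENNReal.ofReal (fX x) := fun x =>
      (Real.enorm_eq_ofReal (hfX_nonneg x))
    simp only [this, hlint]
    exact ENNReal.one_lt_top
  have hfX_integral : ∫ x, fX x = 1 := by
    rw [integral_eq_lintegral_of_nonneg_ae (Filter.Eventually.of_forall hfX_nonneg)
      hfX_meas.aestronglyMeasurable, hlint, ENNReal.toReal_one]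
  -- bound on D
  have hDbound : ∀ x, ‖D x‖ ≤ 4 * Real.sqrt 2 * fX x := by
    intro x
    by_cases hx : x ∈ Set.Icc (0:ℝ) 1
    · rw [hD_eq, Real.norm_eq_abs, abs_mul, abs_of_nonneg (hfX_nonneg x)]
      calc fX x * |G (m+1) x / Real.sqrt (1 - x)| ≤ fX x * (4 * Real.sqrt 2) :=
            mul_le_mul_of_nonneg_left (G_div_bound x hx m) (hfX_nonneg x)
        _ = 4 * Real.sqrt 2 * fX x := by ring
    · rw [hD_eq, hfX_supp x hx]
      simp [hfX_supp x hx]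
  have hDint : Integrable D := by
    apply Integrable.mono' (hfX_int.const_mul (4 * Real.sqrt 2)) hDmeas.aestronglyMeasurable
    exact Filter.Eventually.of_forall hDbound
  refine ⟨hDint.intervalIntegrable, ?_⟩
  -- the joint law
  have hprod : P.map (fun ω => (X ω, T ω)) = (P.map X).prod (P.map T) :=
    (ProbabilityTheory.indepFun_iff_map_prod_eq_prod_map_map hX.aemeasurable
      hT.aemeasurable).mp hindep
  haveI : IsProbabilityMeasure (Measure.map T P) := Measure.isProbabilityMeasure_map hT.aemeasurable
  have hφcont : Continuous (fun p : ℝ × ℝ => (q p.1 p.2) ^ (m+1)) := q_continuous.pow _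
  -- rewrite the integrand
  have hZ : ∀ ω, (T ω ^ 2 + (1 - T ω ^ 2) * (2 * X ω - 1)) ^ (m+1)
      = (q (X ω) (T ω)) ^ (m+1) := by
    intro ω; congr 1; simp only [q]; ring
  -- a.e. bounds on the product measure
  have hae1 : ∀ᵐ p ∂((P.map X).prod (P.map T)), p.1 ∈ Set.Icc (0:ℝ) 1 := by
    rw [ae_iff]
    have hset : {p : ℝ × ℝ | ¬ p.1 ∈ Set.Icc (0:ℝ) 1} = (Set.Icc (0:ℝ) 1)ᶜ ×ˢ Set.univ := by
      ext p; simp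
    rw [hset, Measure.prod_prod]
    have h1 : (P.map X) (Set.Icc (0:ℝ) 1)ᶜ = 0 := by
      rw [Measure.map_apply hX (measurableSet_Icc.compl)]
      have : X ⁻¹' (Set.Icc (0:ℝ) 1)ᶜ = ∅ := by
        ext ω; simp [hX_range ω]
      simp [this]
    simp [h1]
  have hae2 : ∀ᵐ p ∂((P.map X).prod (P.map T)), p.2 ∈ Set.Icc (-1:ℝ) 1 := by
    rw [ae_iff]
    have hset : {p : ℝ × ℝ | ¬ p.2 ∈ Set.Icc (-1:ℝ) 1} = Set.univ ×ˢ (Set.Icc (-1:ℝ) 1)ᶜ := by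
      ext p; simp
    rw [hset, Measure.prod_prod]
    have h1 : (P.map T) (Set.Icc (-1:ℝ) 1)ᶜ = 0 := by
      rw [hT_unif]
      simp [Measure.restrict_apply measurableSet_Icc.compl]
    simp [h1]
  have hφint : Integrable (fun p : ℝ × ℝ => (q p.1 p.2) ^ (m+1)) ((P.map X).prod (P.map T)) := by
    apply Integrable.mono' (integrable_const (1:ℝ)) hφcont.aestronglyMeasurable
    filter_upwards [hae1, hae2] with p hp1 hp2
    rw [Real.norm_eq_abs, abs_pow]
    exact pow_le_one₀ (abs_nonneg _) (q_abs_le p.1 hp1 p.2 hp2)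
  -- main computation
  calc ∫ ω, (T ω ^ 2 + (1 - T ω ^ 2) * (2 * X ω - 1)) ^ (m+1) ∂P
      = ∫ ω, (q (X ω) (T ω)) ^ (m+1) ∂P := by
        exact integral_congr_ae (Filter.Eventually.of_forall (fun ω => hZ ω))
    _ = ∫ p : ℝ × ℝ, (q p.1 p.2) ^ (m+1) ∂(P.map (fun ω => (X ω, T ω))) := by
        rw [integral_map (hX.prodMk hT).aemeasurable hφcont.aestronglyMeasurable]
    _ = ∫ p : ℝ × ℝ, (q p.1 p.2) ^ (m+1) ∂((P.map X).prod (P.map T)) := by rw [hprod]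
    _ = ∫ x, (∫ t, (q x t) ^ (m+1) ∂(P.map T)) ∂(P.map X) := by
        exact MeasureTheory.integral_prod _ hφint
    _ = ∫ x, (∫ s in (0:ℝ)..1, (q x s) ^ (m+1)) ∂(P.map X) := by
        congr 1; funext x
        rw [hT_unif, T_integral]
    _ = ∫ x, fX x * (∫ s in (0:ℝ)..1, (q x s) ^ (m+1)) := by
        rw [hX_law]
        have hdens : (fun x => ENNReal.ofReal (fX x))
            = fun x => ((Real.toNNReal (fX x) : NNReal) : ℝ≥0∞) := rfl
        rw [hdens, integral_withDensity_eq_integral_smul hfX_meas.real_toNNReal]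
        congr 1; funext x
        rw [NNReal.smul_def, Real.coe_toNNReal _ (hfX_nonneg x), smul_eq_mul]
    _ = ∫ x, (fX x - ((m+1 : ℕ) : ℝ) / Real.sqrt 2 * D x) := by
        congr 1; funext x
        by_cases hx : x ∈ Set.Icc (0:ℝ) 1
        · rw [key_eq x hx m, hD_eq]; ring
        · rw [hfX_supp x hx, hD_eq, hfX_supp x hx]; ring
    _ = 1 - ((m+1 : ℕ) : ℝ) / Real.sqrt 2 * ∫ x, D x := by
        rw [integral_sub hfX_int (hDint.const_mul _), hfX_integral, MeasureTheory.integral_const_mul]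
    _ = 1 - ((m+1 : ℕ) : ℝ) / Real.sqrt 2 * ∫ x in (0:ℝ)..1, D x := by
        congr 2
        have h1 : ∫ x, D x = ∫ x in Set.Icc (0:ℝ) 1, D x := by
          refine (setIntegral_eq_integral_of_forall_compl_eq_zero ?_).symm
          intro x hx
          rw [hD_def]
          simp only [hfX_supp x hx]
          simp
        rw [h1, MeasureTheory.integral_Icc_eq_integral_Ioc,
          ← intervalIntegral.integral_of_le (by norm_num : (0:ℝ) ≤ 1)]
    _ = 1 - ((m+1 : ℕ) : ℝ) / Real.sqrt 2 *
          ∫ x in (0:ℝ)..1, fX x / Real.sqrt (1 - x) * G (m+1) x := rfl
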